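/- Let G be an abelian group and S a finite 2-separable generating subset with 0 ∈ S. Let H be a subgroup of G which is a 2-fragment of S, let φ : G → G/H be the canonical morphism, and let K be a subgroup of G/H which is a 1-fragment of φ(S). Then φ⁻¹(K) is a 2-fragment of S. -/

import Mathlib

open scoped Pointwise Classical

/-- The `k`-th connectivity `κ_k(S)`: minimum of `|X + S| - |X|` over finite `X`
with `|X| ≥ k` and `|X + S| ≤ |G| - k`, with `min ∅ = |G| - 2k + 1`. -/
noncomputable def kappa {G : Type*} [AddCommGroup G] [DecidableEq G]
    (k : ℕ) (S : Finset G) : ℕ :=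
  if ∃ X : Finset G, k ≤ X.card ∧ (X + S).card ≤ Nat.card G - k then
    sInf {d : ℕ | ∃ X : Finset G, k ≤ X.card ∧ (X + S).card ≤ Nat.card G - k ∧
      d = (X + S).card - X.card}
  else Nat.card G - 2 * k + 1

/-- `S` is `k`-separable: some `X` has `|X| ≥ k` and `|G \ (X + S)| ≥ k`. -/
def KSeparable {G : Type*} [AddCommGroup G] [DecidableEq G] (k : ℕ) (S : Finset G) : Prop :=
  ∃ X : Finset G, k ≤ X.card ∧ (X + S).card ≤ Nat.card G - k

/-- `X` is a `k`-fragment of `S`: `|X| ≥ k`, `|G \ (X + S)| ≥ k` and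
`|X + S| - |X| = κ_k(S)`. -/
def IsFragment {G : Type*} [AddCommGroup G] [DecidableEq G] (k : ℕ) (S X : Finset G) : Prop :=
  k ≤ X.card ∧ (X + S).card ≤ Nat.card G - k ∧ (X + S).card - X.card = kappa k S

/-- A hyper-atom of `S` is a subgroup of maximal cardinality which is a `1`-fragment. -/
def IsHyperAtom {G : Type*} [AddCommGroup G] [DecidableEq G]
    (S : Finset G) (H : AddSubgroup G) : Prop :=
  (∃ HF : Finset G, (HF : Set G) = (H : Set G) ∧ IsFragment 1 S HF) ∧
  ∀ (K : AddSubgroup G) (KF : Finset G), (KF : Set G) = (K : Set G) →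
    IsFragment 1 S KF → Nat.card K ≤ Nat.card H

/-- Counting lemma: a finset which is the preimage of a finset under the quotient map
has cardinality `|H|` times the cardinality of the base. -/
lemma aux_card_preimage {G : Type*} [AddCommGroup G] (H : AddSubgroup G)
    (B : Finset (G ⧸ H)) (A : Finset G)
    (hA : (A : Set G) = (QuotientAddGroup.mk' H) ⁻¹' (B : Set (G ⧸ H))) :
    A.card = Nat.card H * B.card := by
  have hmk : (⇑(QuotientAddGroup.mk' H) : G → G ⧸ H) = QuotientAddGroup.mk := rfl
  have e := QuotientAddGroup.preimageMkEquivAddSubgroupProdSet H (B : Set (G ⧸ H))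
  have h1 : Nat.card (A : Set G) = A.card := by
    rw [Nat.card_coe_set_eq, Set.ncard_coe_finset]
  have h2 : Nat.card (B : Set (G ⧸ H)) = B.card := by
    rw [Nat.card_coe_set_eq, Set.ncard_coe_finset]
  rw [← h1, ← h2, hA, hmk, Nat.card_congr e, Nat.card_prod]

/-- The preimage of a set under the quotient map, plus `S`, equals the preimage of the
sum with the image of `S`. -/
lemma aux_preimage_add {G : Type*} [AddCommGroup G] (H : AddSubgroup G)
    (U : Set (G ⧸ H)) (S : Finset G) :
    (QuotientAddGroup.mk' H) ⁻¹' U + (S : Set G)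
      = (QuotientAddGroup.mk' H) ⁻¹' (U + (QuotientAddGroup.mk' H) '' (S : Set G)) := by
  set φ := QuotientAddGroup.mk' H
  ext x
  simp only [Set.mem_add, Set.mem_preimage, Set.mem_image, Finset.mem_coe]
  constructor
  · rintro ⟨u, hu, s, hs, rfl⟩
    exact ⟨φ u, hu, φ s, ⟨s, hs, rfl⟩, (map_add φ u s).symm⟩
  · rintro ⟨u, hu, _, ⟨s, hs, rfl⟩, hx⟩
    refine ⟨x - s, ?_, s, hs, by abel⟩
    have : φ (x - s) = u := by
      rw [map_sub, ← hx]; abel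
    rw [this]; exact hu

lemma aux_zero_add_set {α : Type*} [AddMonoid α] (T : Set α) : ({0} : Set α) + T = T := by
  ext x; simp [Set.mem_add]

lemma aux_zero_add_finset {α : Type*} [DecidableEq α] [AddMonoid α] (T : Finset α) :
    ({0} : Finset α) + T = T := by
  ext x; simp [Finset.mem_add]

theorem stmt12 {G : Type*} [AddCommGroup G] [Fintype G] [DecidableEq G] (S : Finset G)
    (hgen : AddSubgroup.closure (S : Set G) = ⊤) (h0S : (0 : G) ∈ S)
    (hsep : KSeparable 2 S)
    (H : AddSubgroup G) (HF : Finset G) (hHF : (HF : Set G) = (H : Set G))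
    (hfrag : IsFragment 2 S HF)
    (K : AddSubgroup (G ⧸ H)) (KF : Finset (G ⧸ H)) (hKF : (KF : Set (G ⧸ H)) = (K : Set (G ⧸ H)))
    (hKfrag : IsFragment 1 (S.image (QuotientAddGroup.mk' H)) KF)
    (PF : Finset G) (hPF : (PF : Set G) = (QuotientAddGroup.mk' H) ⁻¹' (K : Set (G ⧸ H))) :
    IsFragment 2 S PF := by
  classical
  set φ := QuotientAddGroup.mk' H with hφdef
  obtain ⟨hf1, hf2, hf3⟩ := hfrag
  obtain ⟨hK1, hK2, hK3⟩ := hKfrag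
  set h := Nat.card H with hh
  set q := Nat.card (G ⧸ H) with hq
  have hcardG : Nat.card G = q * h := AddSubgroup.card_eq_card_quotient_mul_card_addSubgroup H
  -- H as a preimage of {0}
  have hHset : (H : Set G) = φ ⁻¹' (({0} : Finset (G ⧸ H)) : Set (G ⧸ H)) := by
    ext x
    simp only [Set.mem_preimage, Finset.coe_singleton, Set.mem_singleton_iff, SetLike.mem_coe]
    exact (QuotientAddGroup.eq_zero_iff x).symm
  -- cardinalities
  have hHFcard : HF.card = h * 1 := by
    have := aux_card_preimage H {0} HF (hHF.trans hHset)
    rwa [Finset.card_singleton] at this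
  have hHFSset : ((HF + S : Finset G) : Set G) = φ ⁻¹' ((S.image φ : Finset (G ⧸ H)) : Set (G ⧸ H)) := by
    rw [Finset.coe_add, hHF, hHset, aux_preimage_add, Finset.coe_image,
      Finset.coe_singleton, aux_zero_add_set]
  have hHFScard : (HF + S).card = h * (S.image φ).card :=
    aux_card_preimage H _ _ hHFSset
  have hPFcard : PF.card = h * KF.card :=
    aux_card_preimage H KF PF (by rw [hPF, hKF])
  have hPFSset : ((PF + S : Finset G) : Set G)
      = φ ⁻¹' ((KF + S.image φ : Finset (G ⧸ H)) : Set (G ⧸ H)) := by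
    rw [Finset.coe_add, hPF, ← hKF, aux_preimage_add, Finset.coe_add, Finset.coe_image]
  have hPFScard : (PF + S).card = h * (KF + S.image φ).card :=
    aux_card_preimage H _ _ hPFSset
  -- abbreviations
  set n := (S.image φ).card with hn
  set m := (KF + S.image φ).card with hm
  set c := KF.card with hc
  have h2 : 2 ≤ h := by rw [hHFcard, Nat.mul_one] at hf1; exact hf1
  have hc1 : 1 ≤ c := hK1
  have qpos : 1 ≤ q := Nat.one_le_iff_ne_zero.mpr (Nat.card_pos (α := G ⧸ H)).ne'
  have hn1 : 1 ≤ n := by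
    have : (0 : G ⧸ H) ∈ S.image φ := Finset.mem_image.mpr ⟨0, h0S, map_zero φ⟩
    exact Finset.card_pos.mpr ⟨0, this⟩
  -- n ≤ q - 1
  have hf2' : h * n ≤ q * h - 2 := by rw [← hHFScard, ← hcardG]; exact hf2
  have hnq : n ≤ q - 1 := by
    have h2q : 2 ≤ q * h := le_trans h2 (Nat.le_mul_of_pos_left h qpos)
    have hlt : h * n < h * q := by
      rw [Nat.mul_comm h q]; omega
    have := Nat.lt_of_mul_lt_mul_left hlt
    omega
  -- kappa 1 (S.image φ) ≤ n - 1
  have hKsepcond : ∃ X : Finset (G ⧸ H), 1 ≤ X.card ∧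
      (X + S.image φ).card ≤ Nat.card (G ⧸ H) - 1 := ⟨KF, hK1, hK2⟩
  have hkappa1 : kappa 1 (S.image φ) ≤ n - 1 := by
    unfold kappa
    rw [if_pos hKsepcond]
    refine Nat.sInf_le ⟨{0}, ?_, ?_, ?_⟩
    · simp
    · rw [aux_zero_add_finset]; exact hnq
    · rw [aux_zero_add_finset]; simp [hn]
  -- the three parts of the goal
  have g1 : 2 ≤ PF.card := by
    rw [hPFcard]
    calc 2 = 2 * 1 := by norm_num
    _ ≤ h * c := Nat.mul_le_mul h2 hc1
  have g2 : (PF + S).card ≤ Nat.card G - 2 := by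
    rw [hPFScard, hcardG, Nat.mul_comm q h]
    have h1 : h * m ≤ h * (q - 1) := Nat.mul_le_mul_left h hK2
    rw [Nat.mul_sub, Nat.mul_one] at h1
    omega
  refine ⟨g1, g2, ?_⟩
  have dkap : (PF + S).card - PF.card = h * kappa 1 (S.image φ) := by
    rw [hPFScard, hPFcard, ← Nat.mul_sub, hK3]
  have kap2eq : kappa 2 S = h * n - h := by
    rw [← hf3, hHFScard, hHFcard, Nat.mul_one]
  have upper : (PF + S).card - PF.card ≤ kappa 2 S := by
    rw [dkap, kap2eq]
    calc h * kappa 1 (S.image φ) ≤ h * (n - 1) := Nat.mul_le_mul_left h hkappa1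
    _ = h * n - h := by rw [Nat.mul_sub, Nat.mul_one]
  have lower : kappa 2 S ≤ (PF + S).card - PF.card := by
    unfold KSeparable at hsep
    unfold kappa
    rw [if_pos hsep]
    exact Nat.sInf_le ⟨PF, g1, g2, rfl⟩
  exact le_antisymm upper lower
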